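/- Under the assumptions of the self-consistency equation, one has 1 − X − Y ≥ (1/2)·min(Im(z), 1) > 0, where X = |m|² and Y = (d/(d−1))|w|²|m|²/|z + (d/(d−1))m|². -/

import Mathlib

/-- `Y` from the singularity analysis of the self-consistency equation. -/
noncomputable def Ysc (d : ℕ) (z w m : ℂ) : ℝ :=
  ((d : ℝ) / ((d : ℝ) - 1)) * ‖w‖ ^ 2 * ‖m‖ ^ 2
    / ‖z + ((d : ℂ) / ((d : ℂ) - 1)) * m‖ ^ 2


private lemma sc_aux (c t zi X Y : ℝ) (hc0 : 0 < c) (hc2 : c ≤ 2) (ht : 0 < t)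
    (hzi : 0 < zi) (hX0 : 0 < X) (hY0 : 0 ≤ Y) (htX : t ^ 2 ≤ X)
    (hI : c * t * (1 - X - Y) = (Y + c * X) * zi) :
    (1 / 2) * min zi 1 ≤ 1 - X - Y := by
  have hrhs : 0 < (Y + c * X) * zi :=
    mul_pos (by nlinarith [mul_pos hc0 hX0]) hzi
  have hpos : 0 < 1 - X - Y := by
    by_contra h
    push_neg at h
    have h9 : c * t * (1 - X - Y) ≤ 0 :=
      mul_nonpos_of_nonneg_of_nonpos (mul_pos hc0 ht).le (by linarith)
    rw [hI] at h9
    linarith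
  have hpoly : c ^ 2 * X * (X + Y) ≤ (Y + c * X) ^ 2 := by
    have h11 : 0 ≤ c * X * Y * (2 - c) :=
      mul_nonneg (mul_nonneg (mul_nonneg hc0.le hX0.le) hY0) (by linarith)
    nlinarith [sq_nonneg Y, h11]
  have hsq : (X + Y) * zi ^ 2 ≤ (1 - X - Y) ^ 2 := by
    have h4 : (c * t * (1 - X - Y)) ^ 2 = ((Y + c * X) * zi) ^ 2 := by rw [hI]
    have h5 : c ^ 2 * X * (X + Y) * zi ^ 2 ≤ ((Y + c * X) * zi) ^ 2 := by
      nlinarith [sq_nonneg zi, hpoly]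
    have hS0 : (0:ℝ) ≤ X + Y := by linarith
    have h6a : c ^ 2 * t ^ 2 * ((X + Y) * zi ^ 2) ≤ c ^ 2 * X * (X + Y) * zi ^ 2 := by
      nlinarith [mul_nonneg (mul_nonneg (sq_nonneg c) hS0) (sq_nonneg zi), htX]
    have h6b : c ^ 2 * X * (X + Y) * zi ^ 2 ≤ c ^ 2 * t ^ 2 * (1 - X - Y) ^ 2 := by
      nlinarith [h4, h5]
    have h7 : 0 < c ^ 2 * t ^ 2 := by positivity
    exact le_of_mul_le_mul_left (le_trans h6a h6b) h7
  rcases le_or_gt (X + Y) (1 / 4) with hS | hS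
  · have hmin : min zi 1 ≤ 1 := min_le_right _ _
    linarith
  · have hzz : (1 / 2) * zi ≤ 1 - X - Y := by
      nlinarith [hsq, hpos, hzi]
    have hmin : min zi 1 ≤ zi := min_le_left _ _
    linarith

/-- Under the self-consistency equation, `1 - X - Y ≥ (1/2)·min(Im z, 1) > 0`. -/
theorem self_consistency_singularity_lower_bound (d : ℕ) (hd : 3 ≤ d) (z w m : ℂ)
    (hz : 0 < z.im) (hm : 0 < m.im)
    (hne : z + ((d : ℂ) / ((d : ℂ) - 1)) * m ≠ 0)
    (heq : m * ((‖w‖ : ℂ) ^ 2 - (z + ((d : ℂ) / ((d : ℂ) - 1)) * m) * (z + m))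
      = z + ((d : ℂ) / ((d : ℂ) - 1)) * m) :
    (1 / 2) * min z.im 1 ≤ 1 - ‖m‖ ^ 2 - Ysc d z w m
    ∧ 0 < (1 / 2) * min z.im 1 := by
  have hd1 : (1:ℝ) < (d:ℝ) := by
    have : (3:ℝ) ≤ (d:ℝ) := by exact_mod_cast hd
    linarith
  have hd3 : (3:ℝ) ≤ (d:ℝ) := by exact_mod_cast hd
  set c : ℝ := (d:ℝ) / ((d:ℝ) - 1) with hcdef
  have hc0 : 0 < c := div_pos (by linarith) (by linarith)
  have hc2 : c ≤ 2 := by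
    rw [hcdef, div_le_iff₀ (by linarith)]
    linarith
  have hcC : ((c:ℝ):ℂ) = (d:ℂ) / ((d:ℂ) - 1) := by
    rw [hcdef]; push_cast; ring
  set W : ℝ := ‖w‖ ^ 2 with hWdef
  have hW0 : 0 ≤ W := by positivity
  set ζ : ℂ := z + (c:ℂ) * m with hζdef
  have hζeq : ζ = z + ((d : ℂ) / ((d : ℂ) - 1)) * m := by rw [hζdef, hcC]
  set D : ℂ := (W:ℂ) - ζ * (z + m) with hDdef
  have heq' : m * D = ζ := by
    rw [hDdef, hζeq, hWdef]
    push_cast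
    exact heq
  have hζ0 : ζ ≠ 0 := by rw [hζeq]; exact hne
  have hm0 : m ≠ 0 := by
    intro h; rw [h] at hm; simp at hm
  have hD0 : D ≠ 0 := by
    intro h; rw [h, mul_zero] at heq'; exact hζ0 heq'.symm
  set X : ℝ := ‖m‖ ^ 2 with hXdef
  set B : ℝ := ‖D‖ ^ 2 with hBdef
  set A : ℝ := ‖ζ‖ ^ 2 with hAdef
  have hX0 : 0 < X := by rw [hXdef]; exact pow_pos (norm_pos_iff.mpr hm0) 2
  have hB0 : 0 < B := by rw [hBdef]; exact pow_pos (norm_pos_iff.mpr hD0) 2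
  have hA0 : 0 < A := by rw [hAdef]; exact pow_pos (norm_pos_iff.mpr hζ0) 2
  have hXB : X * B = A := by
    rw [hXdef, hBdef, hAdef, ← heq', norm_mul]; ring
  -- imaginary part of ζ
  have hζim : ζ.im = z.im + c * m.im := by
    rw [hζdef]; simp [Complex.add_im, Complex.mul_im]
  -- key identity from multiplying by conj D
  have h1 : (ζ * (starRingEnd ℂ) D).im = m.im * B := by
    rw [← heq', mul_assoc, Complex.mul_conj]
    simp [Complex.mul_im, hBdef, Complex.sq_norm]
  have hexp : ζ * (starRingEnd ℂ) D
      = (W:ℂ) * ζ - (Complex.normSq ζ : ℂ) * ((starRingEnd ℂ) z + (starRingEnd ℂ) m) := by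
    rw [hDdef]
    simp only [map_sub, map_mul, map_add, Complex.conj_ofReal]
    have := Complex.mul_conj ζ
    linear_combination (-(starRingEnd ℂ) z - (starRingEnd ℂ) m) * this
  have h2 : (ζ * (starRingEnd ℂ) D).im = W * ζ.im + Complex.normSq ζ * (z.im + m.im) := by
    rw [hexp]
    simp [Complex.sub_im, Complex.mul_im, Complex.add_im, Complex.conj_im]
    ring
  have hnsζ : Complex.normSq ζ = A := by rw [hAdef, Complex.sq_norm]
  have hK : m.im * B = W * (z.im + c * m.im) + A * (z.im + m.im) := by
    rw [← h1, h2, hnsζ, hζim]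
  -- Y
  set Y : ℝ := Ysc d z w m with hYdef
  have hYval : Y = c * W * X / A := by
    rw [hYdef, Ysc, ← hζeq, ← hcdef, ← hWdef, ← hXdef, ← hAdef]
  have hYB : Y * B = c * W := by
    rw [hYval, ← hXB]
    field_simp
  have hY0 : 0 ≤ Y := by
    nlinarith [mul_nonneg (le_of_lt hc0) hW0]
  have hI : c * m.im * (1 - X - Y) = (Y + c * X) * z.im := by
    have h3 : c * m.im * (1 - X - Y) * B = (Y + c * X) * z.im * B := by
      have hA' : A = X * B := hXB.symm
      rw [hA'] at hK
      linear_combination c * hK + (-(c * m.im) - z.im) * hYB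
    exact mul_right_cancel₀ (ne_of_gt hB0) h3
  have htX : m.im ^ 2 ≤ X := by
    rw [hXdef]
    have h10 : m.im ≤ ‖m‖ := le_trans (le_abs_self _) (Complex.abs_im_le_norm m)
    exact pow_le_pow_left₀ hm.le h10 2
  refine ⟨sc_aux c m.im z.im X Y hc0 hc2 hm hz hX0 hY0 htX hI, ?_⟩
  have : 0 < min z.im 1 := lt_min hz one_pos
  linarith
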